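/- Let Z be a real-valued integrable random variable with symmetric distribution (Z and -Z have the same law) and let ρ be a law-invariant, cash-invariant, positively homogeneous risk measure on L¹ with ρ(Z) ∈ ℝ. Suppose returns R satisfy: for every π ∈ ℝ^d, X_π := π·(R-r𝟏) has the same law as π·(μ-r𝟏) + Z·√(πᵀΣπ) for a fixed mean vector μ ≠ r𝟏 and positive definite covariance Σ. If ρ(Z) > 0, then for each ν > 0 the infimum of ρ(X_π) over {π : π·(μ-r𝟏) = ν} equals -ν + ν·ρ(Z)/SR_max, where SR_max = √((μ-r𝟏)ᵀΣ⁻¹(μ-r𝟏)), and it is attained at π* = ν·Σ⁻¹(μ-r𝟏)/((μ-r𝟏)ᵀΣ⁻¹(μ-r𝟏)). -/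

import Mathlib

open MeasureTheory Matrix

/-- Elliptical returns: for a law-invariant, cash-invariant, positively homogeneous risk
measure with `ρ(Z) > 0`, the minimal risk over portfolios with expected excess return `ν`
equals `-ν + ν ρ(Z)/SR_max` and is attained at `π* = ν Σ⁻¹(μ-r𝟏)/((μ-r𝟏)ᵀΣ⁻¹(μ-r𝟙))`. -/
theorem stmt3 {Ω : Type*} [MeasurableSpace Ω] (ℙ : Measure Ω) [IsProbabilityMeasure ℙ]
    (d : ℕ) (R : Fin d → Ω → ℝ) (r : ℝ)
    (μv : Fin d → ℝ) (S : Matrix (Fin d) (Fin d) ℝ)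
    (hS : S.PosDef)
    (hμ : μv ≠ fun _ => r)
    (Z : Ω → ℝ) (hZint : Integrable Z ℙ)
    (hZsym : ℙ.map Z = ℙ.map (fun ω => -Z ω))
    (ρ : (Ω → ℝ) → EReal)
    (hlaw : ∀ X₁ X₂ : Ω → ℝ, ℙ.map X₁ = ℙ.map X₂ → ρ X₁ = ρ X₂)
    (hcash : ∀ (X : Ω → ℝ) (c : ℝ), ρ (fun ω => X ω + c) = ρ X - (c : EReal))
    (hpos : ∀ (X : Ω → ℝ) (c : ℝ), 0 ≤ c → ρ (fun ω => c * X ω) = (c : EReal) * ρ X)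
    (ρZ : ℝ) (hρZ : ρ Z = (ρZ : EReal)) (hρZpos : 0 < ρZ)
    (X : (Fin d → ℝ) → Ω → ℝ)
    (hX : ∀ π, X π = fun ω => ∑ i, π i * (R i ω - r))
    (hlawX : ∀ π : Fin d → ℝ,
      ℙ.map (X π) = ℙ.map (fun ω =>
        (π ⬝ᵥ fun i => μv i - r) + Z ω * Real.sqrt (π ⬝ᵥ S.mulVec π)))
    (ν : ℝ) (hν : 0 < ν) :
    let a : Fin d → ℝ := fun i => μv i - r
    let SRmax : ℝ := Real.sqrt (a ⬝ᵥ S⁻¹.mulVec a)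
    let πstar : Fin d → ℝ := fun i => ν * (S⁻¹.mulVec a) i / (a ⬝ᵥ S⁻¹.mulVec a)
    (πstar ⬝ᵥ a = ν) ∧
    ρ (X πstar) = ((-ν + ν * ρZ / SRmax : ℝ) : EReal) ∧
    ∀ π : Fin d → ℝ, π ⬝ᵥ a = ν →
      ((-ν + ν * ρZ / SRmax : ℝ) : EReal) ≤ ρ (X π) := by
  intro a SRmax πstar
  -- basic notation
  set b : Fin d → ℝ := S⁻¹.mulVec a with hb
  set q : ℝ := a ⬝ᵥ b with hq
  -- a ≠ 0
  have ha : a ≠ 0 := by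
    intro h
    apply hμ
    funext i
    have := congrFun h i
    simpa [a, sub_eq_zero] using this
  -- q > 0
  have hSinv : (S⁻¹).PosDef := hS.inv
  have hq0 : 0 < q := by
    have := hSinv.dotProduct_mulVec_pos ha
    simpa [hq, hb, star_trivial] using this
  -- S * S⁻¹ = 1
  have hSb : S.mulVec b = a := by
    rw [hb, Matrix.mulVec_mulVec, Matrix.mul_nonsing_inv _ hS.det_pos.ne'.isUnit, Matrix.one_mulVec]
  have hSsymm : Sᵀ = S := hS.isHermitian.eq
  -- key bilinear symmetry: for any u, b ⬝ᵥ S.mulVec u = a ⬝ᵥ u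
  have hbS : ∀ u : Fin d → ℝ, b ⬝ᵥ S.mulVec u = a ⬝ᵥ u := by
    intro u
    rw [Matrix.dotProduct_mulVec, ← Matrix.mulVec_transpose, hSsymm, hSb]
  -- the general formula: ρ (X π) = √(πᵀSπ) ρZ - π⬝a
  have key : ∀ π : Fin d → ℝ,
      ρ (X π) = ((Real.sqrt (π ⬝ᵥ S.mulVec π) * ρZ - π ⬝ᵥ a : ℝ) : EReal) := by
    intro π
    set σ : ℝ := Real.sqrt (π ⬝ᵥ S.mulVec π) with hσ
    have h1 : ρ (X π) = ρ (fun ω => (π ⬝ᵥ a) + Z ω * σ) := hlaw _ _ (hlawX π)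
    have h2 : (fun ω => (π ⬝ᵥ a) + Z ω * σ) = (fun ω => (σ * Z ω) + (π ⬝ᵥ a)) := by
      funext ω; ring
    rw [h1, h2, hcash (fun ω => σ * Z ω) (π ⬝ᵥ a), hpos Z σ (Real.sqrt_nonneg _), hρZ,
      ← EReal.coe_mul, ← EReal.coe_sub]
  -- variance of πstar
  have hbSb : b ⬝ᵥ S.mulVec b = q := by rw [hbS b, hq, dotProduct_comm]
  have hπstar : πstar = fun i => (ν / q) * b i := by
    funext i; simp only [πstar]; rw [hq]; ring
  have hπstar_a : πstar ⬝ᵥ a = ν := by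
    rw [hπstar]
    have : (fun i => (ν / q) * b i) ⬝ᵥ a = (ν / q) * (b ⬝ᵥ a) := by
      simp [dotProduct, Finset.mul_sum, mul_assoc]
    rw [this, dotProduct_comm, ← hq]
    field_simp
  have hπstar_var : πstar ⬝ᵥ S.mulVec πstar = ν ^ 2 / q := by
    rw [hπstar]
    have h1 : S.mulVec (fun i => (ν / q) * b i) = fun i => (ν / q) * (S.mulVec b) i := by
      have : (fun i => (ν / q) * b i) = (ν / q) • b := by funext i; simp [smul_eq_mul]
      rw [this, Matrix.mulVec_smul]; funext i; simp [smul_eq_mul]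
    rw [h1]
    have : (fun i => (ν / q) * b i) ⬝ᵥ (fun i => (ν / q) * (S.mulVec b) i)
        = (ν / q) ^ 2 * (b ⬝ᵥ S.mulVec b) := by
      simp [dotProduct, Finset.mul_sum]; ring_nf
    rw [this, hbSb]
    field_simp
  have hsqrtq : Real.sqrt q > 0 := Real.sqrt_pos.2 hq0
  have hSR : SRmax = Real.sqrt q := rfl
  have hσstar : Real.sqrt (πstar ⬝ᵥ S.mulVec πstar) = ν / Real.sqrt q := by
    rw [hπstar_var]
    rw [show ν ^ 2 / q = (ν / Real.sqrt q) ^ 2 by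
      rw [div_pow, Real.sq_sqrt hq0.le]]
    exact Real.sqrt_sq (by positivity)
  refine ⟨hπstar_a, ?_, ?_⟩
  · rw [key, hπstar_a, hσstar, hSR]
    norm_cast
    ring
  · intro π hπa
    rw [key π, hπa, hSR]
    -- Cauchy–Schwarz step: π ⬝ᵥ S.mulVec π ≥ ν²/q
    have hCS : ν ^ 2 / q ≤ π ⬝ᵥ S.mulVec π := by
      set t : ℝ := ν / q with ht
      set v : Fin d → ℝ := fun i => π i - t * b i with hv
      have h0 : 0 ≤ v ⬝ᵥ S.mulVec v := by
        have := hS.posSemidef.dotProduct_mulVec_nonneg v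
        simpa [star_trivial] using this
      have hπSb : π ⬝ᵥ S.mulVec b = ν := by rw [hSb, hπa]
      have hbSπ : b ⬝ᵥ S.mulVec π = ν := by
        rw [hbS π, dotProduct_comm, hπa]
      have hexp : v ⬝ᵥ S.mulVec v
          = π ⬝ᵥ S.mulVec π - t * (b ⬝ᵥ S.mulVec π) - t * (π ⬝ᵥ S.mulVec b)
            + t ^ 2 * (b ⬝ᵥ S.mulVec b) := by
        have hv' : v = π - t • b := by funext i; simp [hv, smul_eq_mul]
        rw [hv', Matrix.mulVec_sub, Matrix.mulVec_smul, sub_dotProduct,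
          smul_dotProduct, dotProduct_sub, dotProduct_sub,
          dotProduct_smul, dotProduct_smul, smul_eq_mul, smul_eq_mul,
          smul_eq_mul]
        ring
      rw [hexp, hbSπ, hπSb, hbSb] at h0
      have e1 : t * ν = ν ^ 2 / q := by rw [ht]; ring
      have e2 : t ^ 2 * q = ν ^ 2 / q := by
        rw [ht]; field_simp
      linarith
    have hσge : ν / Real.sqrt q ≤ Real.sqrt (π ⬝ᵥ S.mulVec π) := by
      calc ν / Real.sqrt q = Real.sqrt (ν ^ 2 / q) := by
            rw [show ν ^ 2 / q = (ν / Real.sqrt q) ^ 2 by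
              rw [div_pow, Real.sq_sqrt hq0.le]]
            exact (Real.sqrt_sq (by positivity)).symm
        _ ≤ _ := Real.sqrt_le_sqrt hCS
    have : (-ν + ν * ρZ / Real.sqrt q : ℝ)
        ≤ Real.sqrt (π ⬝ᵥ S.mulVec π) * ρZ - ν := by
      have h1 : ν / Real.sqrt q * ρZ ≤ Real.sqrt (π ⬝ᵥ S.mulVec π) * ρZ :=
        mul_le_mul_of_nonneg_right hσge hρZpos.le
      calc (-ν + ν * ρZ / Real.sqrt q : ℝ) = ν / Real.sqrt q * ρZ - ν := by ring
        _ ≤ _ := by linarith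
    exact_mod_cast this
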